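/- Let λ, θ > 0 and set α := λ/(λ + θ). Define W_θ(y) := 1 + (λ/θ)(1 − e^{−θy}) for y ≥ 0. Then for every integer k ≥ 1, ∫₀^∞ θ e^{−θy} · W_θ(y)^{−2} · (1 − 1/W_θ(y))^{k−1} dy = (α^{−1} − 1) · α^k / k. -/

import Mathlib

open MeasureTheory Real

/-- for the mutation model on the critical linear birth–death process
with rate `λ` and mutation rate `θ`, with clonal scale function
`W_θ(y) = 1 + (λ/θ)(1 − e^{−θy})`, the limiting frequency of species of abundance `k`
is Fisher's log-series `(α⁻¹ − 1) α^k / k` with `α = λ/(λ+θ)`. -/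
theorem mutation_model_fisher_log_series
    (lam θ : ℝ) (hlam : 0 < lam) (hθ : 0 < θ)
    (α : ℝ) (hα : α = lam / (lam + θ))
    (Wθ : ℝ → ℝ) (hWθ : ∀ y : ℝ, Wθ y = 1 + (lam / θ) * (1 - Real.exp (-θ * y))) :
    ∀ k : ℕ, 1 ≤ k →
      (∫ y in Set.Ioi (0:ℝ),
          θ * Real.exp (-θ * y) * (Wθ y) ⁻¹ ^ 2 * (1 - 1 / Wθ y) ^ (k - 1))
        = (α⁻¹ - 1) * α ^ k / k := by
  have hWfun : Wθ = fun y => 1 + (lam / θ) * (1 - Real.exp (-θ * y)) := funext hWθ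
  subst hWfun hα
  intro k hk
  set W : ℝ → ℝ := fun y => 1 + (lam / θ) * (1 - Real.exp (-θ * y)) with hWdef
  have hθne : θ ≠ 0 := ne_of_gt hθ
  have hlamne : lam ≠ 0 := ne_of_gt hlam
  have hkne : (k : ℝ) ≠ 0 := Nat.cast_ne_zero.mpr (by omega)
  have hlθ : 0 < lam + θ := by linarith
  have hWge : ∀ y : ℝ, 0 ≤ y → 1 ≤ W y := by
    intro y hy
    have he : Real.exp (-θ * y) ≤ 1 := Real.exp_le_one_iff.mpr (by nlinarith)
    have h1 : 0 ≤ (lam / θ) * (1 - Real.exp (-θ * y)) := by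
      apply mul_nonneg (le_of_lt (div_pos hlam hθ)); linarith
    simp only [hWdef]; linarith
  have hWne : ∀ y : ℝ, 0 ≤ y → W y ≠ 0 := fun y hy => by
    have := hWge y hy; linarith
  -- derivative of W
  have hWderiv : ∀ y : ℝ, HasDerivAt W (lam * Real.exp (-θ * y)) y := by
    intro y
    have h1 : HasDerivAt (fun y : ℝ => -θ * y) (-θ) y := by
      simpa using (hasDerivAt_id y).const_mul (-θ)
    have h2 : HasDerivAt (fun y : ℝ => Real.exp (-θ * y))
        (Real.exp (-θ * y) * (-θ)) y := (Real.hasDerivAt_exp _).comp y h1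
    have h3 : HasDerivAt W ((lam / θ) * (0 - Real.exp (-θ * y) * (-θ))) y := by
      exact ((hasDerivAt_const y (1:ℝ)).sub h2).const_mul (lam / θ) |>.const_add 1
    convert h3 using 1
    field_simp; ring
  set f : ℝ → ℝ := fun y => θ / (lam * k) * (1 - 1 / W y) ^ k with hfdef
  set g : ℝ → ℝ := fun y =>
    θ * Real.exp (-θ * y) * (W y)⁻¹ ^ 2 * (1 - 1 / W y) ^ (k - 1) with hgdef
  have hfderiv : ∀ y ∈ Set.Ioi (0:ℝ), HasDerivAt f (g y) y := by
    intro y hy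
    have hy0 : (0:ℝ) ≤ y := le_of_lt hy
    have hne := hWne y hy0
    have h1 : HasDerivAt (fun y => 1 - 1 / W y)
        (lam * Real.exp (-θ * y) / (W y) ^ 2) y := by
      have hinv : HasDerivAt (fun y => (W y)⁻¹)
          (-(lam * Real.exp (-θ * y)) / (W y) ^ 2) y := (hWderiv y).inv hne
      have := hinv.const_sub 1
      simp only [one_div]
      refine this.congr_deriv ?_
      ring
    have h2 := (h1.pow k).const_mul (θ / (lam * k))
    refine h2.congr_deriv ?_
    simp only [hgdef]
    field_simp
  have hgnn : ∀ y ∈ Set.Ioi (0:ℝ), 0 ≤ g y := by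
    intro y hy
    have hy0 : (0:ℝ) ≤ y := le_of_lt hy
    have hW1 := hWge y hy0
    have h1 : (0:ℝ) ≤ 1 - 1 / W y := by
      have : 1 / W y ≤ 1 := by
        rw [div_le_one (by linarith)]; linarith
      linarith
    have : 0 ≤ θ * Real.exp (-θ * y) := mul_nonneg (le_of_lt hθ) (Real.exp_pos _).le
    positivity
  have hWcont : Continuous W := by
    simp only [hWdef]; fun_prop
  have hfcont : ContinuousOn f (Set.Ici (0:ℝ)) := by
    apply ContinuousOn.mul continuousOn_const
    apply ContinuousOn.pow
    apply ContinuousOn.sub continuousOn_const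
    exact ContinuousOn.div continuousOn_const hWcont.continuousOn
      (fun y hy => hWne y hy)
  -- limit at infinity
  have hexp : Filter.Tendsto (fun y : ℝ => Real.exp (-θ * y)) Filter.atTop (nhds 0) := by
    have h1 : Filter.Tendsto (fun y : ℝ => θ * y) Filter.atTop Filter.atTop :=
      Filter.Tendsto.const_mul_atTop hθ Filter.tendsto_id
    have h2 := Real.tendsto_exp_neg_atTop_nhds_zero.comp h1
    simp only [Function.comp_def] at h2
    simpa [neg_mul] using h2
  have hWt : Filter.Tendsto W Filter.atTop (nhds (1 + lam / θ)) := by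
    have h2 := (((tendsto_const_nhds (x := (1:ℝ))).sub hexp).const_mul (lam / θ)).const_add (1:ℝ)
    simpa [hWdef, neg_mul] using h2
  have hden : (1:ℝ) + lam / θ ≠ 0 := by positivity
  have hft : Filter.Tendsto f Filter.atTop
      (nhds (θ / (lam * k) * (lam / (lam + θ)) ^ k)) := by
    have h1 : Filter.Tendsto (fun y => 1 - 1 / W y) Filter.atTop
        (nhds (lam / (lam + θ))) := by
      have h2 := (hWt.inv₀ hden).const_sub (1:ℝ)
      have heq : (1:ℝ) - (1 + lam / θ)⁻¹ = lam / (lam + θ) := by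
        field_simp
        ring
      rw [heq] at h2
      simpa [one_div] using h2
    exact (h1.pow k).const_mul _
  have key := integral_Ioi_of_hasDerivAt_of_nonneg (hfcont 0 Set.self_mem_Ici) hfderiv hgnn hft
  have hf0 : f 0 = 0 := by
    have hW0 : W 0 = 1 := by simp [hWdef]
    simp [hfdef, hW0, zero_pow (show k ≠ 0 by omega)]
  rw [show (∫ y in Set.Ioi (0:ℝ),
      θ * Real.exp (-θ * y) * (W y)⁻¹ ^ 2 * (1 - 1 / W y) ^ (k - 1))
      = ∫ y in Set.Ioi (0:ℝ), g y from rfl, key, hf0]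
  rw [inv_div]
  field_simp
  ring
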